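/- arXiv:2510.02553 — 3 statements merged into one kernel-verified Lean document; each statement's English description precedes it below -/
import Mathlib

section
/- Let $A \in \mathbb{R}^{3\times 3}$ be symmetric positive semidefinite and $B : [s_-, s_+] \to \mathbb{R}^{3\times 3}$ continuous and symmetric-valued. Suppose $H : [s_-, s_+] \to \mathbb{C}^{3\times 3}$ is a $C^1$ symmetric-matrix-valued solution of the Riccati equation $\dot{H} + HAH + B = 0$ with $\operatorname{Im}(H(s_-))$ positive definite. Then $\operatorname{Im}(H(s))$ is positive definite for all $s \in [s_-, s_+]$. -/
open Set Matrix Filter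

/-! ### Auxiliary lemmas -/

/-- Imaginary part of a product of complex matrices. -/
lemma map_im_mul (M N : Matrix (Fin 3) (Fin 3) ℂ) :
    (M * N).map Complex.im =
      M.map Complex.re * N.map Complex.im + M.map Complex.im * N.map Complex.re := by
  ext i j
  simp [Matrix.mul_apply, Matrix.map_apply, Complex.im_sum, Complex.mul_im,
    Finset.sum_add_distrib]

/-- Real part of a product of complex matrices. -/
lemma map_re_mul (M N : Matrix (Fin 3) (Fin 3) ℂ) :
    (M * N).map Complex.re =
      M.map Complex.re * N.map Complex.re - M.map Complex.im * N.map Complex.im := by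
  ext i j
  simp [Matrix.mul_apply, Matrix.map_apply, Complex.re_sum, Complex.mul_re,
    Finset.sum_sub_distrib]

/-- The key trace identity driving the determinant evolution. -/
lemma trace_adjugate_mul (Q X Y : Matrix (Fin 3) (Fin 3) ℝ) :
    ((Y.adjugate) * (-(X * Q * Y + Y * Q * X))).trace = -(2 * (Q * X).trace) * Y.det := by
  have h1 : (Y.adjugate * (X * Q * Y)).trace = Y.det * (Q * X).trace := by
    rw [show Y.adjugate * (X * Q * Y) = (Y.adjugate * X * Q) * Y by
      simp [Matrix.mul_assoc], Matrix.trace_mul_comm, show Y * (Y.adjugate * X * Q)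
        = (Y * Y.adjugate) * (X * Q) by simp [Matrix.mul_assoc],
      Matrix.mul_adjugate, Matrix.smul_mul, Matrix.trace_smul, Matrix.one_mul,
      Matrix.trace_mul_comm X Q]
    simp [smul_eq_mul]
  have h2 : (Y.adjugate * (Y * Q * X)).trace = Y.det * (Q * X).trace := by
    rw [show Y.adjugate * (Y * Q * X) = (Y.adjugate * Y) * (Q * X) by simp [Matrix.mul_assoc],
      Matrix.adjugate_mul, Matrix.smul_mul, Matrix.trace_smul]
    simp [smul_eq_mul]
  rw [Matrix.mul_neg, Matrix.mul_add, Matrix.trace_neg, Matrix.trace_add, h1, h2]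
  ring

/-- Derivative of the determinant of a `3 × 3` matrix-valued function. -/
lemma det3_deriv {D : Set ℝ} {Y : ℝ → Matrix (Fin 3) (Fin 3) ℝ}
    {W : Matrix (Fin 3) (Fin 3) ℝ} {s : ℝ}
    (h : ∀ i j, HasDerivWithinAt (fun t => Y t i j) (W i j) D s) :
    HasDerivWithinAt (fun t => (Y t).det) (((Y s).adjugate * W).trace) D s := by
  have key := ((((h 0 0).mul (h 1 1)).mul (h 2 2)).sub
      (((h 0 0).mul (h 1 2)).mul (h 2 1))).sub
      ((((h 0 1).mul (h 1 0)).mul (h 2 2)).sub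
      (((h 0 1).mul (h 1 2)).mul (h 2 0))) |>.add
      ((((h 0 2).mul (h 1 0)).mul (h 2 1)).sub
      (((h 0 2).mul (h 1 1)).mul (h 2 0)))
  have hfun : (fun t => (Y t).det) = fun t =>
      (Y t 0 0 * Y t 1 1 * Y t 2 2 - Y t 0 0 * Y t 1 2 * Y t 2 1 -
        (Y t 0 1 * Y t 1 0 * Y t 2 2 - Y t 0 1 * Y t 1 2 * Y t 2 0) +
        (Y t 0 2 * Y t 1 0 * Y t 2 1 - Y t 0 2 * Y t 1 1 * Y t 2 0)) := by
    funext t; rw [Matrix.det_fin_three]; ring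
  rw [hfun]
  convert (show HasDerivWithinAt (fun t =>
      (Y t 0 0 * Y t 1 1 * Y t 2 2 - Y t 0 0 * Y t 1 2 * Y t 2 1 -
        (Y t 0 1 * Y t 1 0 * Y t 2 2 - Y t 0 1 * Y t 1 2 * Y t 2 0) +
        (Y t 0 2 * Y t 1 0 * Y t 2 1 - Y t 0 2 * Y t 1 1 * Y t 2 0))) _ D s from key) using 1
  simp [Matrix.trace, Matrix.mul_apply, Matrix.adjugate_fin_three, Fin.sum_univ_three,
    Matrix.vecMul, dotProduct]
  ring

/-- Positivity of the determinant is preserved along the flow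
`Y' = -(X A Y + Y A X)`. -/
lemma aux_detpos (sm sp : ℝ) (hs : sm ≤ sp)
    (A : Matrix (Fin 3) (Fin 3) ℝ)
    (X Y : ℝ → Matrix (Fin 3) (Fin 3) ℝ)
    (hXcont : ∀ i j, ContinuousOn (fun s => X s i j) (Icc sm sp))
    (hYderiv : ∀ s ∈ Icc sm sp, ∀ i j, HasDerivWithinAt (fun t => Y t i j)
      ((-(X s * A * Y s + Y s * A * X s)) i j) (Icc sm sp) s)
    (hinit : 0 < (Y sm).det) :
    ∀ s ∈ Icc sm sp, 0 < (Y s).det := by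
  set f : ℝ → ℝ := fun t => 2 * (A * X t).trace with hf
  have hfcont : ContinuousOn f (Icc sm sp) := by
    apply continuousOn_const.mul
    simp only [Matrix.trace, Matrix.diag, Matrix.mul_apply]
    refine continuousOn_finset_sum _ (fun i _ => ?_)
    exact continuousOn_finset_sum _ (fun j _ => continuousOn_const.mul (hXcont j i))
  set ψ : ℝ → ℝ := fun s => ∫ t in sm..s, f t with hψdef
  have hψcont : ContinuousOn ψ (Icc sm sp) := by
    have := intervalIntegral.continuousOn_primitive_interval
      (f := f) (μ := MeasureTheory.volume) (a := sm) (b := sp) ?_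
    · rwa [uIcc_of_le hs] at this
    · rw [uIcc_of_le hs]
      exact (hfcont.mono (by simp)).integrableOn_compact isCompact_Icc
  have hdet : ∀ s ∈ Icc sm sp,
      HasDerivWithinAt (fun t => (Y t).det) (-(f s) * (Y s).det) (Icc sm sp) s := by
    intro s hss
    have := det3_deriv (fun i j => hYderiv s hss i j)
    rwa [trace_adjugate_mul, show -(2 * (A * X s).trace) = -(f s) by rw [hf]] at this
  have hmemIci : ∀ s ∈ Ico sm sp, Icc sm sp ∈ nhdsWithin s (Ici s) := by
    intro s hss
    refine mem_nhdsWithin.mpr ⟨Iio sp, isOpen_Iio, hss.2, ?_⟩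
    rintro y ⟨h1, h2⟩
    exact ⟨le_trans hss.1 h2, le_of_lt h1⟩
  have hmemIoi : ∀ s ∈ Ico sm sp, Icc sm sp ∈ nhdsWithin s (Ioi s) := by
    intro s hss
    exact nhdsWithin_mono s Ioi_subset_Ici_self (hmemIci s hss)
  have hψ : ∀ s ∈ Ico sm sp, HasDerivWithinAt ψ (f s) (Ici s) s := by
    intro s hss
    have hssIcc : s ∈ Icc sm sp := ⟨hss.1, hss.2.le⟩
    apply intervalIntegral.integral_hasDerivWithinAt_right
      (t := Ioi s)
    · apply ContinuousOn.intervalIntegrable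
      rw [uIcc_of_le hss.1]
      exact hfcont.mono (Icc_subset_Icc le_rfl hss.2.le)
    · exact ⟨Icc sm sp, hmemIoi s hss,
        (hfcont.aestronglyMeasurable measurableSet_Icc)⟩
    · exact ((hfcont s hssIcc).mono_of_mem_nhdsWithin (hmemIoi s hss))
  set g : ℝ → ℝ := fun s => (Y s).det * Real.exp (ψ s) with hg
  have hgderiv : ∀ s ∈ Ico sm sp, HasDerivWithinAt g 0 (Ici s) s := by
    intro s hss
    have hssIcc : s ∈ Icc sm sp := ⟨hss.1, hss.2.le⟩
    have hd : HasDerivWithinAt (fun t => (Y t).det) (-(f s) * (Y s).det) (Ici s) s :=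
      (hdet s hssIcc).mono_of_mem_nhdsWithin (hmemIci s hss)
    have he : HasDerivWithinAt (fun t => Real.exp (ψ t)) (Real.exp (ψ s) * f s) (Ici s) s :=
      (hψ s hss).exp
    have : HasDerivWithinAt (fun t => (Y t).det * Real.exp (ψ t))
        (-(f s) * (Y s).det * Real.exp (ψ s) + (Y s).det * (Real.exp (ψ s) * f s)) (Ici s) s :=
      hd.mul he
    convert this using 1
    ring
  have hgcont : ContinuousOn g (Icc sm sp) := by
    refine ContinuousOn.mul ?_ (Real.continuous_exp.comp_continuousOn hψcont)
    exact fun s hss => (hdet s hss).continuousWithinAt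
  have hconst := constant_of_has_deriv_right_zero hgcont hgderiv
  intro s hss
  have h1 : g s = g sm := hconst s hss
  have h2 : g sm = (Y sm).det := by
    simp [hg, hψdef, intervalIntegral.integral_same]
  have h3 := Real.exp_pos (ψ s)
  rw [h2] at h1
  simp only [hg] at h1
  nlinarith [h1, hinit, h3]

lemma qf_scale (M : Matrix (Fin 3) (Fin 3) ℝ) (a : ℝ) (u : Fin 3 → ℝ) :
    (a • u) ⬝ᵥ M *ᵥ (a • u) = a * a * (u ⬝ᵥ M *ᵥ u) := by
  rw [Matrix.mulVec_smul, dotProduct_smul, smul_dotProduct]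
  simp [smul_eq_mul]; ring

/-- A symmetric matrix entrywise close to a uniformly positive definite
matrix is positive definite. -/
lemma posdef_of_near (M N : Matrix (Fin 3) (Fin 3) ℝ) (hN : Nᴴ = N) (c : ℝ) (_hc : 0 < c)
    (hM : ∀ v : Fin 3 → ℝ, ‖v‖ = 1 → c ≤ v ⬝ᵥ M *ᵥ v)
    (hclose : ∀ i j, |N i j - M i j| < c / 9) : N.PosDef := by
  have key : ∀ v : Fin 3 → ℝ, ‖v‖ = 1 → 0 < v ⬝ᵥ N *ᵥ v := by
    intro v hv
    have hvb : ∀ i, |v i| ≤ 1 := by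
      intro i
      have := norm_le_pi_norm v i
      rwa [hv] at this
    have hterm : ∀ i j, -(c / 9) < (N i j - M i j) * (v i * v j) := by
      intro i j
      have h1 : |(N i j - M i j) * (v i * v j)| ≤ |N i j - M i j| := by
        rw [abs_mul]
        have : |v i * v j| ≤ 1 := by
          rw [abs_mul]
          exact mul_le_one₀ (hvb i) (abs_nonneg _) (hvb j)
        nlinarith [abs_nonneg (N i j - M i j)]
      have h2 := neg_abs_le ((N i j - M i j) * (v i * v j))
      have h3 := hclose i j
      linarith
    have hexp : v ⬝ᵥ N *ᵥ v = v ⬝ᵥ M *ᵥ v +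
        ((N 0 0 - M 0 0) * (v 0 * v 0) + (N 0 1 - M 0 1) * (v 0 * v 1) +
         (N 0 2 - M 0 2) * (v 0 * v 2) + (N 1 0 - M 1 0) * (v 1 * v 0) +
         (N 1 1 - M 1 1) * (v 1 * v 1) + (N 1 2 - M 1 2) * (v 1 * v 2) +
         (N 2 0 - M 2 0) * (v 2 * v 0) + (N 2 1 - M 2 1) * (v 2 * v 1) +
         (N 2 2 - M 2 2) * (v 2 * v 2)) := by
      simp [dotProduct, Matrix.mulVec, Fin.sum_univ_three]
      ring
    have hMv := hM v hv
    have := hterm 0 0; have := hterm 0 1; have := hterm 0 2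
    have := hterm 1 0; have := hterm 1 1; have := hterm 1 2
    have := hterm 2 0; have := hterm 2 1; have := hterm 2 2
    linarith [hexp]
  refine posDef_iff_dotProduct_mulVec.mpr ⟨hN, fun x hx => ?_⟩
  have hxn : ‖x‖ ≠ 0 := by simpa using hx
  have hxpos : (0:ℝ) < ‖x‖ := lt_of_le_of_ne (norm_nonneg x) (Ne.symm hxn)
  set u : Fin 3 → ℝ := ‖x‖⁻¹ • x with hu
  have hun : ‖u‖ = 1 := by
    rw [hu, norm_smul]
    simp [abs_of_pos hxpos, inv_mul_cancel₀ hxn]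
  have hxu : x = ‖x‖ • u := by
    rw [hu, smul_smul, mul_inv_cancel₀ hxn, one_smul]
  have := key u hun
  have hq : x ⬝ᵥ N *ᵥ x = ‖x‖ * ‖x‖ * (u ⬝ᵥ N *ᵥ u) := by
    conv_lhs => rw [hxu]
    exact qf_scale N ‖x‖ u
  rw [show (star x) = x from star_trivial x, hq]
  positivity

/-- A continuous family of symmetric matrices with everywhere positive
determinant that starts positive definite remains positive definite. -/
lemma aux_posdef (sm sp : ℝ) (_hs : sm ≤ sp)
    (Y : ℝ → Matrix (Fin 3) (Fin 3) ℝ)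
    (hYcont : ∀ i j, ContinuousOn (fun s => Y s i j) (Icc sm sp))
    (hYherm : ∀ s ∈ Icc sm sp, (Y s)ᴴ = Y s)
    (hdetpos : ∀ s ∈ Icc sm sp, 0 < (Y s).det)
    (hinit : (Y sm).PosDef) :
    ∀ s ∈ Icc sm sp, (Y s).PosDef := by
  have semidef_to_posdef : ∀ s ∈ Icc sm sp, (Y s).PosSemidef → (Y s).PosDef := by
    intro s hss hsd
    refine posDef_iff_dotProduct_mulVec.mpr ⟨hsd.1, fun x hx => ?_⟩
    rcases (hsd.dotProduct_mulVec_nonneg x).lt_or_eq with hlt | heq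
    · exact hlt
    · exfalso
      have h0 : (Y s) *ᵥ x = 0 := (hsd.dotProduct_mulVec_zero_iff x).mp heq.symm
      exact hx (Matrix.eq_zero_of_mulVec_eq_zero (ne_of_gt (hdetpos s hss)) h0)
  have hqcont : ∀ x : Fin 3 → ℝ, ContinuousOn (fun t => x ⬝ᵥ (Y t) *ᵥ x) (Icc sm sp) := by
    intro x
    simp only [dotProduct, Matrix.mulVec]
    refine continuousOn_finset_sum _ (fun i _ => ContinuousOn.mul continuousOn_const ?_)
    exact continuousOn_finset_sum _ (fun j _ => (hYcont i j).mul continuousOn_const)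
  have hsemi : ∀ s ∈ Icc sm sp, (Y s).PosSemidef := by
    by_contra hc
    push_neg at hc
    obtain ⟨s₁, hs₁, hns₁⟩ := hc
    set Bad := {s | s ∈ Icc sm sp ∧ ¬ (Y s).PosSemidef} with hBad
    have hne : Bad.Nonempty := ⟨s₁, hs₁, hns₁⟩
    have hbdd : BddBelow Bad := ⟨sm, fun x hx => hx.1.1⟩
    set b := sInf Bad with hb
    have hbmem : b ∈ Icc sm sp :=
      ⟨le_csInf hne (fun x hx => hx.1.1), (csInf_le hbdd ⟨hs₁, hns₁⟩).trans hs₁.2⟩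
    have hlt : ∀ t ∈ Icc sm sp, t < b → (Y t).PosSemidef := by
      intro t ht htb
      by_contra h
      exact absurd (csInf_le hbdd ⟨ht, h⟩) (not_le.mpr htb)
    have hYb : (Y b).PosSemidef := by
      refine posSemidef_iff_dotProduct_mulVec.mpr ⟨hYherm b hbmem, fun x => ?_⟩
      rw [show (star x) = x from star_trivial x]
      rcases eq_or_lt_of_le hbmem.1 with h | h
      · have := hinit.posSemidef.dotProduct_mulVec_nonneg x
        rw [show (star x) = x from star_trivial x] at this
        rwa [← h]
      · have hcw : ContinuousWithinAt (fun t => x ⬝ᵥ (Y t) *ᵥ x) (Ico sm b) b := by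
          refine ((hqcont x).continuousWithinAt hbmem).mono ?_
          exact fun t ht => ⟨ht.1, ht.2.le.trans hbmem.2⟩
        have hNB : (nhdsWithin b (Ico sm b)).NeBot := by
          apply mem_closure_iff_nhdsWithin_neBot.mp
          rw [closure_Ico (ne_of_lt h)]
          exact ⟨le_of_lt h, le_rfl⟩
        refine ge_of_tendsto hcw ?_
        filter_upwards [self_mem_nhdsWithin] with t ht
        have := (hlt t ⟨ht.1, ht.2.le.trans hbmem.2⟩ ht.2).dotProduct_mulVec_nonneg x
        rwa [show (star x) = x from star_trivial x] at this
    have hYbpd : (Y b).PosDef := semidef_to_posdef b hbmem hYb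
    have hcpt : IsCompact (Metric.sphere (0 : Fin 3 → ℝ) 1) := isCompact_sphere _ _
    have hsne : (Metric.sphere (0 : Fin 3 → ℝ) 1).Nonempty := by
      refine ⟨(1 : Fin 3 → ℝ), ?_⟩
      simp [Metric.mem_sphere, dist_zero_right]
    have hqv : Continuous (fun v : Fin 3 → ℝ => v ⬝ᵥ (Y b) *ᵥ v) := by
      simp only [dotProduct, Matrix.mulVec]
      refine continuous_finset_sum _ (fun i _ => Continuous.mul (continuous_apply i) ?_)
      exact continuous_finset_sum _ (fun j _ => continuous_const.mul (continuous_apply j))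
    obtain ⟨v₀, hv₀S, hv₀min'⟩ := hcpt.exists_isMinOn hsne hqv.continuousOn
    have hv₀min : ∀ v ∈ Metric.sphere (0 : Fin 3 → ℝ) 1,
        v₀ ⬝ᵥ (Y b) *ᵥ v₀ ≤ v ⬝ᵥ (Y b) *ᵥ v := fun v hv => hv₀min' hv
    set c := v₀ ⬝ᵥ (Y b) *ᵥ v₀ with hcdef
    have hv₀ne : v₀ ≠ 0 := by
      intro h0
      rw [mem_sphere_iff_norm, h0] at hv₀S
      simp at hv₀S
    have hcpos : 0 < c := by
      have := hYbpd.dotProduct_mulVec_pos hv₀ne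
      rwa [show (star v₀) = v₀ from star_trivial v₀] at this
    have hminsph : ∀ v : Fin 3 → ℝ, ‖v‖ = 1 → c ≤ v ⬝ᵥ (Y b) *ᵥ v := by
      intro v hv
      exact hv₀min v (by simpa [mem_sphere_iff_norm] using hv)
    have hev : ∀ᶠ t in nhdsWithin b (Icc sm sp),
        ∀ i : Fin 3, ∀ j : Fin 3, |Y t i j - Y b i j| < c / 9 := by
      rw [eventually_all]
      intro i
      rw [eventually_all]
      intro j
      have htd : Filter.Tendsto (fun t => Y t i j) (nhdsWithin b (Icc sm sp)) (nhds (Y b i j)) :=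
        (hYcont i j).continuousWithinAt hbmem
      have := Metric.tendsto_nhds.mp htd (c / 9) (by linarith)
      filter_upwards [this] with t ht
      rwa [Real.dist_eq] at ht
    have hev2 : ∀ᶠ t in nhdsWithin b (Icc sm sp), (Y t).PosDef := by
      filter_upwards [hev, eventually_mem_nhdsWithin] with t ht htIcc
      exact posdef_of_near (Y b) (Y t) (hYherm t htIcc) c hcpos hminsph ht
    obtain ⟨ε, hε, hball⟩ := Metric.mem_nhdsWithin_iff.mp hev2
    obtain ⟨x, hxBad, hxlt⟩ := exists_lt_of_csInf_lt hne (lt_add_of_pos_right b hε)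
    have hbx : b ≤ x := csInf_le hbdd hxBad
    have hxball : x ∈ Metric.ball b ε := by
      rw [Metric.mem_ball, Real.dist_eq, abs_of_nonneg (by linarith)]
      linarith
    exact hxBad.2 (hball ⟨hxball, hxBad.1⟩).posSemidef
  intro s hss
  exact semidef_to_posdef s hss (hsemi s hss)

/-- Preservation of positive-definiteness of the imaginary part along the
matrix Riccati flow `Ḣ + HAH + B = 0`. -/
theorem riccati_preserves_posdef_im
    (sm sp : ℝ) (hs : sm ≤ sp)
    (A : Matrix (Fin 3) (Fin 3) ℝ) (hA : A.PosSemidef)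
    (B : ℝ → Matrix (Fin 3) (Fin 3) ℝ)
    (hBcont : ∀ i j, ContinuousOn (fun s => B s i j) (Icc sm sp))
    (hBsym : ∀ s ∈ Icc sm sp, (B s)ᵀ = B s)
    (H H' : ℝ → Matrix (Fin 3) (Fin 3) ℂ)
    (hHderiv : ∀ s ∈ Icc sm sp, ∀ i j,
      HasDerivWithinAt (fun t => H t i j) (H' s i j) (Icc sm sp) s)
    (hH'cont : ∀ i j, ContinuousOn (fun s => H' s i j) (Icc sm sp))
    (hric : ∀ s ∈ Icc sm sp,
      H' s + H s * A.map (Complex.ofReal) * H s + (B s).map (Complex.ofReal) = 0)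
    (hHsym : ∀ s ∈ Icc sm sp, (H s)ᵀ = H s)
    (hinit : ((H sm).map Complex.im).PosDef) :
    ∀ s ∈ Icc sm sp, ((H s).map Complex.im).PosDef := by
  set X : ℝ → Matrix (Fin 3) (Fin 3) ℝ := fun s => (H s).map Complex.re with hX
  set Y : ℝ → Matrix (Fin 3) (Fin 3) ℝ := fun s => (H s).map Complex.im with hY
  have hAre : (A.map Complex.ofReal).map Complex.re = A := by
    ext i j; simp [Matrix.map_apply]
  have hAim : (A.map Complex.ofReal).map Complex.im = 0 := by
    ext i j; simp [Matrix.map_apply]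
  have hW : ∀ s ∈ Icc sm sp,
      (H' s).map Complex.im = -(X s * A * Y s + Y s * A * X s) := by
    intro s hss
    have h0 : H' s = -(H s * A.map Complex.ofReal * H s + (B s).map Complex.ofReal) := by
      have := hric s hss
      rw [add_assoc] at this
      exact eq_neg_of_add_eq_zero_left this
    have h1 : ((H s * A.map Complex.ofReal * H s).map Complex.im)
        = X s * A * Y s + Y s * A * X s := by
      rw [map_im_mul, map_im_mul, map_re_mul, hAre, hAim]
      simp only [Matrix.mul_zero, Matrix.zero_mul, sub_zero, add_zero, zero_add, hX, hY]
    have h2 : (((B s).map Complex.ofReal).map Complex.im) = 0 := by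
      ext i j; simp [Matrix.map_apply]
    rw [h0]
    have h3 : ((-(H s * A.map Complex.ofReal * H s + (B s).map Complex.ofReal)).map Complex.im)
        = -((H s * A.map Complex.ofReal * H s).map Complex.im
            + ((B s).map Complex.ofReal).map Complex.im) := by
      ext i j
      simp [Matrix.map_apply, Matrix.neg_apply, Matrix.add_apply]
    rw [h3, h1, h2, add_zero]
  have hYderiv : ∀ s ∈ Icc sm sp, ∀ i j, HasDerivWithinAt (fun t => Y t i j)
      ((-(X s * A * Y s + Y s * A * X s)) i j) (Icc sm sp) s := by
    intro s hss i j
    have base := hHderiv s hss i j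
    have := (Complex.imCLM.hasFDerivAt (x := H s i j)).comp_hasDerivWithinAt s base
    rw [← hW s hss]
    exact this
  have hXcont : ∀ i j, ContinuousOn (fun s => X s i j) (Icc sm sp) := by
    intro i j
    exact Complex.continuous_re.comp_continuousOn
      (fun s hss => (hHderiv s hss i j).continuousWithinAt)
  have hYcont : ∀ i j, ContinuousOn (fun s => Y s i j) (Icc sm sp) := by
    intro i j
    exact Complex.continuous_im.comp_continuousOn
      (fun s hss => (hHderiv s hss i j).continuousWithinAt)
  have hYherm : ∀ s ∈ Icc sm sp, (Y s)ᴴ = Y s := by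
    intro s hss
    ext i j
    have := congrFun (congrFun (hHsym s hss) i) j
    rw [Matrix.transpose_apply] at this
    simp [Matrix.conjTranspose_apply, Matrix.map_apply, hY]
    rw [this]
  have hdetpos : ∀ s ∈ Icc sm sp, 0 < (Y s).det :=
    aux_detpos sm sp hs A X Y hXcont hYderiv hinit.det_pos
  exact aux_posdef sm sp hs Y hYcont hYherm hdetpos hinit
end

section
/- Let $H(s) = Z(s)Y(s)^{-1}$ where $Y, Z : [s_-, s_+] \to \mathbb{C}^{n\times n}$ solve $\dot{Y} = AZ$, $\dot{Z} = -BY$ with $A$ real symmetric, $B(s)$ real symmetric, $Y(s_-) = I$, $Z(s_-) = iI$, and assume $Y(s)$ is invertible and $H(s)$ symmetric with $\operatorname{Im}(H(s))$ positive definite for all $s$. Then the quantity $\det(\operatorname{Im}(H(s))) \cdot |\det Y(s)|^2$ is constant in $s$. -/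
open Set Matrix

/-- Conservation law: `det(Im H(s)) · |det Y(s)|²` is constant along the
complexified Jacobi system, where `H = Z Y⁻¹`. -/
theorem det_im_H_abs_det_Y_sq_const
    {n : ℕ} (sm sp : ℝ) (hs : sm ≤ sp)
    (A : Matrix (Fin n) (Fin n) ℝ) (hAsym : Aᵀ = A)
    (B : ℝ → Matrix (Fin n) (Fin n) ℝ)
    (hBsym : ∀ s ∈ Icc sm sp, (B s)ᵀ = B s)
    (Y Z : ℝ → Matrix (Fin n) (Fin n) ℂ)
    (hY : ∀ s ∈ Icc sm sp, ∀ i j, HasDerivWithinAt (fun t => Y t i j)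
      ((A.map (Complex.ofReal) * Z s) i j) (Icc sm sp) s)
    (hZ : ∀ s ∈ Icc sm sp, ∀ i j, HasDerivWithinAt (fun t => Z t i j)
      ((-((B s).map (Complex.ofReal) * Y s)) i j) (Icc sm sp) s)
    (hY0 : Y sm = 1) (hZ0 : Z sm = Complex.I • (1 : Matrix (Fin n) (Fin n) ℂ))
    (hYinv : ∀ s ∈ Icc sm sp, (Y s).det ≠ 0)
    (hHsym : ∀ s ∈ Icc sm sp, (Z s * (Y s)⁻¹)ᵀ = Z s * (Y s)⁻¹)
    (hHim : ∀ s ∈ Icc sm sp, ((Z s * (Y s)⁻¹).map Complex.im).PosDef) :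
    ∀ s ∈ Icc sm sp,
      ((Z s * (Y s)⁻¹).map Complex.im).det * ‖(Y s).det‖ ^ 2
        = ((Z sm * (Y sm)⁻¹).map Complex.im).det
            * ‖(Y sm).det‖ ^ 2 := by
  have hsm : sm ∈ Icc sm sp := ⟨le_refl _, hs⟩
  set Ac : Matrix (Fin n) (Fin n) ℂ := A.map Complex.ofReal with hAc
  have hAcH : Acᴴ = Ac := by
    ext i j
    simp only [hAc, Matrix.conjTranspose_apply, Matrix.map_apply, Complex.star_def,
      Complex.conj_ofReal]
    exact congrArg _ ((Matrix.transpose_apply A i j).symm.trans (by rw [hAsym]))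
  -- The Wronskian W t = (Y t)ᴴ * Z t - (Z t)ᴴ * Y t has zero derivative
  have hWderiv : ∀ s ∈ Icc sm sp, ∀ i j,
      HasDerivWithinAt (fun t => ((Y t)ᴴ * Z t - (Z t)ᴴ * Y t) i j) 0 (Icc sm sp) s := by
    intro s hsmem i j
    have hBcH : ((B s).map Complex.ofReal)ᴴ = (B s).map Complex.ofReal := by
      ext i j
      simp only [Matrix.conjTranspose_apply, Matrix.map_apply, Complex.star_def,
        Complex.conj_ofReal]
      exact congrArg _ ((Matrix.transpose_apply (B s) i j).symm.trans (by rw [hBsym s hsmem]))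
    have hd1 : HasDerivWithinAt (fun t => ∑ k, star (Y t k i) * Z t k j)
        (∑ k, (star ((Ac * Z s) k i) * Z s k j +
          star (Y s k i) * ((-((B s).map Complex.ofReal * Y s)) k j)))
        (Icc sm sp) s :=
      HasDerivWithinAt.fun_sum fun k _ => ((hY s hsmem k i).star.mul (hZ s hsmem k j))
    have hd2 : HasDerivWithinAt (fun t => ∑ k, star (Z t k i) * Y t k j)
        (∑ k, (star ((-((B s).map Complex.ofReal * Y s)) k i) * Y s k j +
          star (Z s k i) * ((Ac * Z s) k j)))
        (Icc sm sp) s :=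
      HasDerivWithinAt.fun_sum fun k _ => ((hZ s hsmem k i).star.mul (hY s hsmem k j))
    have hD : (Ac * Z s)ᴴ * Z s + (Y s)ᴴ * (-(((B s).map Complex.ofReal) * Y s))
        - ((-(((B s).map Complex.ofReal) * Y s))ᴴ * Y s + (Z s)ᴴ * (Ac * Z s)) = 0 := by
      rw [conjTranspose_mul, hAcH, conjTranspose_neg, conjTranspose_mul, hBcH]
      noncomm_ring
    have hd0 : (∑ k, (star ((Ac * Z s) k i) * Z s k j +
          star (Y s k i) * ((-((B s).map Complex.ofReal * Y s)) k j)))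
        - (∑ k, (star ((-((B s).map Complex.ofReal * Y s)) k i) * Y s k j +
          star (Z s k i) * ((Ac * Z s) k j))) = 0 := by
      have h0 : ((Ac * Z s)ᴴ * Z s + (Y s)ᴴ * (-(((B s).map Complex.ofReal) * Y s))
          - ((-(((B s).map Complex.ofReal) * Y s))ᴴ * Y s + (Z s)ᴴ * (Ac * Z s))) i j
          = (0 : Matrix (Fin n) (Fin n) ℂ) i j := by rw [hD]
      simpa [Matrix.add_apply, Matrix.sub_apply, Matrix.mul_apply,
        Matrix.conjTranspose_apply, Finset.sum_add_distrib, mul_comm, mul_left_comm] using h0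
    have hfun : (fun t => ((Y t)ᴴ * Z t - (Z t)ᴴ * Y t) i j)
        = fun t => (∑ k, star (Y t k i) * Z t k j) - ∑ k, star (Z t k i) * Y t k j := by
      funext t
      simp [Matrix.sub_apply, Matrix.mul_apply, Matrix.conjTranspose_apply]
    rw [hfun, ← hd0]
    exact hd1.sub hd2
  -- hence it is constant
  have hWconst : ∀ s ∈ Icc sm sp,
      (Y s)ᴴ * Z s - (Z s)ᴴ * Y s = (Y sm)ᴴ * Z sm - (Z sm)ᴴ * Y sm := by
    intro s hsmem
    ext i j
    have hcont : ContinuousOn (fun t => ((Y t)ᴴ * Z t - (Z t)ᴴ * Y t) i j) (Icc sm sp) :=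
      fun t ht => (hWderiv t ht i j).continuousWithinAt
    have hder : ∀ x ∈ Ico sm sp,
        HasDerivWithinAt (fun t => ((Y t)ᴴ * Z t - (Z t)ᴴ * Y t) i j) 0 (Ici x) x := by
      intro x hx
      refine (hWderiv x ⟨hx.1, hx.2.le⟩ i j).mono_of_mem_nhdsWithin ?_
      rw [mem_nhdsWithin]
      exact ⟨Iio sp, isOpen_Iio, hx.2, fun y hy => ⟨hx.1.trans hy.2, hy.1.le⟩⟩
    exact constant_of_has_deriv_right_zero hcont hder s hsmem
  -- value at sm
  have hWsm : (Y sm)ᴴ * Z sm - (Z sm)ᴴ * Y sm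
      = (2 * Complex.I) • (1 : Matrix (Fin n) (Fin n) ℂ) := by
    rw [hY0, hZ0]
    rw [Matrix.conjTranspose_smul, Matrix.conjTranspose_one]
    rw [Matrix.one_mul, Matrix.smul_mul, Matrix.one_mul]
    rw [← sub_smul]
    congr 1
    simp [Complex.star_def, Complex.conj_I]
    ring
  -- main identity: the quantity is 1 everywhere
  have key : ∀ s ∈ Icc sm sp,
      ((Z s * (Y s)⁻¹).map Complex.im).det * ‖(Y s).det‖ ^ 2 = 1 := by
    intro s hsmem
    have hdet : IsUnit (Y s).det := isUnit_iff_ne_zero.2 (hYinv s hsmem)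
    have hZs : Z s = (Z s * (Y s)⁻¹) * Y s := by
      rw [Matrix.mul_assoc, Matrix.nonsing_inv_mul _ hdet, Matrix.mul_one]
    have hHconj : (Z s * (Y s)⁻¹)ᴴ = (Z s * (Y s)⁻¹).map star := by
      ext i j
      simp only [Matrix.conjTranspose_apply, Matrix.map_apply]
      congr 1
      exact congrFun (congrFun (hHsym s hsmem) i) j
    have hsub : (Z s * (Y s)⁻¹) - (Z s * (Y s)⁻¹)ᴴ
        = (2 * Complex.I) • (((Z s * (Y s)⁻¹).map Complex.im).map Complex.ofReal) := by
      rw [hHconj]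
      ext i j
      simp only [Matrix.sub_apply, Matrix.map_apply, Matrix.smul_apply, smul_eq_mul,
        Complex.star_def]
      rw [Complex.sub_conj]
      push_cast
      ring
    have hWs : (Y s)ᴴ * ((Z s * (Y s)⁻¹) - (Z s * (Y s)⁻¹)ᴴ) * Y s
        = (2 * Complex.I) • (1 : Matrix (Fin n) (Fin n) ℂ) := by
      have h1 := hWconst s hsmem
      rw [hWsm] at h1
      rw [Matrix.mul_sub, Matrix.sub_mul, ← conjTranspose_mul,
        Matrix.mul_assoc ((Y s)ᴴ), ← hZs]
      exact h1
    have hone : (Y s)ᴴ * (((Z s * (Y s)⁻¹).map Complex.im).map Complex.ofReal) * Y s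
        = 1 := by
      have h2 : (2 * Complex.I) •
          ((Y s)ᴴ * (((Z s * (Y s)⁻¹).map Complex.im).map Complex.ofReal) * Y s)
          = (2 * Complex.I) • (1 : Matrix (Fin n) (Fin n) ℂ) := by
        rw [← hWs, hsub, Matrix.mul_smul, Matrix.smul_mul]
      have h2I : (2 * Complex.I) ≠ 0 := by
        simp [Complex.I_ne_zero]
      exact smul_right_injective _ h2I h2
    have hdet1 : star (Y s).det * (((Z s * (Y s)⁻¹).map Complex.im).map Complex.ofReal).det
        * (Y s).det = 1 := by
      have := congrArg Matrix.det hone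
      rwa [Matrix.det_mul, Matrix.det_mul, Matrix.det_conjTranspose, Matrix.det_one] at this
    have hmapdet : (((Z s * (Y s)⁻¹).map Complex.im).map Complex.ofReal).det
        = Complex.ofReal (((Z s * (Y s)⁻¹).map Complex.im).det) :=
      (RingHom.map_det Complex.ofRealHom _).symm
    rw [hmapdet] at hdet1
    have habs : (Complex.ofReal (‖(Y s).det‖ ^ 2))
        = (Y s).det * star ((Y s).det) := by
      rw [← Complex.normSq_eq_norm_sq]
      exact (Complex.mul_conj _).symm
    apply Complex.ofReal_injective
    rw [Complex.ofReal_mul, habs, Complex.ofReal_one, ← hdet1]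
    ring
  intro s hsmem
  rw [key s hsmem, key sm hsm]
end

section
/- Let $\tau \ge 1$, $C > 0$, and let $\phi : V_\rho \to \mathbb{C}$ satisfy $\operatorname{Im}\phi(s,z') \ge C\|z'\|^2$ on $V_\rho = (s_--\rho, s_++\rho) \times \{z' \in \mathbb{R}^3 : \|z'\| < \rho\}$, with $0 < \rho \le 1$ and $s_+ - s_- \le T$. Suppose $F : V_\rho \to \mathbb{C}$ satisfies the pointwise bound $|F(s,z')| \le |e^{i\tau\phi(s,z')}|\,(\tau^2\|z'\|^{N_0+1} + \tau\|z'\|^{N_1+1} + \tau^{-N_2})$ with integers $N_0 \le N_1+2$ and $N_1 \le 2N_2+1$. Then $\|F\|_{L^2(V_\rho)}^2 \le M\,\tau^{-N_0 + 3/2}$ for a constant $M$ depending only on $C$, $T$, $N_0$, $N_1$, $N_2$. -/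
open Set Real MeasureTheory

private lemma pow_le_factorial_mul_exp {x : ℝ} (hx : 0 ≤ x) (n : ℕ) :
    x ^ n ≤ (Nat.factorial n : ℝ) * Real.exp x := by
  have h2 : x ^ n / (Nat.factorial n : ℝ) ≤ ∑ i ∈ Finset.range (n + 1), x ^ i / (Nat.factorial i : ℝ) :=
    Finset.single_le_sum (f := fun i => x ^ i / (Nat.factorial i : ℝ))
      (fun i _ => by positivity) (Finset.self_mem_range_succ n)
  have h3 : x ^ n / (Nat.factorial n : ℝ) ≤ Real.exp x := h2.trans (Real.sum_le_exp_of_nonneg hx _)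
  have hn : (0:ℝ) < (Nat.factorial n : ℝ) := by positivity
  rw [div_le_iff₀ hn] at h3
  linarith

private lemma moment_bound {a : ℝ} (r : ℝ) (ha : 0 < a) (m : ℕ) :
    (r ^ m) ^ 2 * Real.exp (-a * r ^ 2) ≤ (Nat.factorial m : ℝ) / a ^ m := by
  rw [← pow_mul, mul_comm m 2, pow_mul]
  rw [le_div_iff₀ (pow_pos ha m)]
  have h := pow_le_factorial_mul_exp (x := a * r ^ 2) (by positivity) m
  calc (r ^ 2) ^ m * Real.exp (-a * r ^ 2) * a ^ m
      = (a * r ^ 2) ^ m * Real.exp (-a * r ^ 2) := by rw [mul_pow]; ring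
    _ ≤ ((Nat.factorial m : ℝ) * Real.exp (a * r ^ 2)) * Real.exp (-a * r ^ 2) :=
        mul_le_mul_of_nonneg_right h (Real.exp_nonneg _)
    _ = (Nat.factorial m : ℝ) := by rw [mul_assoc, ← Real.exp_add]; simp

private lemma tau_pow_bound {τ : ℝ} (hτ : 1 ≤ τ) (k m : ℕ) (e : ℝ)
    (h : (k : ℝ) - m - 3 / 2 ≤ e) :
    τ ^ k * (τ ^ m)⁻¹ * (τ ^ ((3:ℝ) / 2))⁻¹ ≤ τ ^ e := by
  have hτ0 : (0:ℝ) < τ := one_pos.trans_le hτ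
  rw [← Real.rpow_natCast τ k, ← Real.rpow_natCast τ m,
    ← Real.rpow_neg hτ0.le, ← Real.rpow_neg hτ0.le,
    ← Real.rpow_add hτ0, ← Real.rpow_add hτ0]
  exact Real.rpow_le_rpow_of_exponent_le hτ (by push_cast; linarith)

private lemma tau_pow_bound' {τ : ℝ} (hτ : 1 ≤ τ) (n : ℕ) (e : ℝ)
    (h : -(2 * (n : ℝ)) - 3 / 2 ≤ e) :
    (τ ^ (-(n:ℝ))) ^ 2 * (τ ^ ((3:ℝ) / 2))⁻¹ ≤ τ ^ e := by
  have hτ0 : (0:ℝ) < τ := one_pos.trans_le hτ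
  rw [← Real.rpow_natCast (τ ^ (-(n:ℝ))) 2, ← Real.rpow_mul hτ0.le,
    ← Real.rpow_neg hτ0.le, ← Real.rpow_add hτ0]
  exact Real.rpow_le_rpow_of_exponent_le hτ (by push_cast; linarith)

set_option maxHeartbeats 2000000 in
/-- Quantitative `L²` bound for the Gaussian beam residual: if
`|F| ≤ |e^{iτφ}| (τ²‖z'‖^{N₀+1} + τ‖z'‖^{N₁+1} + τ^{-N₂})` on the tube `V_ρ`
with `Im φ ≥ C‖z'‖²`, `N₀ ≤ N₁+2`, `N₁ ≤ 2N₂+1`, then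
`‖F‖²_{L²(V_ρ)} ≤ M τ^{-N₀+3/2}`. -/
theorem gaussian_beam_residual_L2_bound
    (C T : ℝ) (hC : 0 < C) (hT : 0 < T) (N₀ N₁ N₂ : ℕ)
    (hN₀ : N₀ ≤ N₁ + 2) (hN₁ : N₁ ≤ 2 * N₂ + 1) :
    ∃ M : ℝ, ∀ (sm sp ρ τ : ℝ)
      (φ F : ℝ × EuclideanSpace ℝ (Fin 3) → ℂ),
      1 ≤ τ → 0 < ρ → ρ ≤ 1 → sm ≤ sp → sp - sm ≤ T →
      Measurable F →
      (∀ p ∈ (Set.Ioo (sm - ρ) (sp + ρ)) ×ˢ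
          Metric.ball (0 : EuclideanSpace ℝ (Fin 3)) ρ,
        C * ‖p.2‖ ^ 2 ≤ (φ p).im) →
      (∀ p ∈ (Set.Ioo (sm - ρ) (sp + ρ)) ×ˢ
          Metric.ball (0 : EuclideanSpace ℝ (Fin 3)) ρ,
        ‖F p‖ ≤ ‖Complex.exp (Complex.I * τ * φ p)‖
          * (τ ^ 2 * ‖p.2‖ ^ (N₀ + 1) + τ * ‖p.2‖ ^ (N₁ + 1) + τ ^ (-(N₂ : ℝ)))) →
      (∫ p in (Set.Ioo (sm - ρ) (sp + ρ)) ×ˢ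
          Metric.ball (0 : EuclideanSpace ℝ (Fin 3)) ρ, ‖F p‖ ^ 2)
        ≤ M * τ ^ (-(N₀ : ℝ) + 3 / 2) := by
  have hπ : (0:ℝ) < π := Real.pi_pos
  refine ⟨(T + 2) * (3 * ((((Nat.factorial (N₀+1) : ℝ)) / C ^ (N₀+1) + ((Nat.factorial (N₁+1) : ℝ)) / C ^ (N₁+1) + 1)
      * (π ^ ((3:ℝ)/2) / C ^ ((3:ℝ)/2)))), ?_⟩
  intro sm sp ρ τ φ F hτ hρ hρ1 hsmsp hTb hFmeas hφ hF
  have hτ0 : (0:ℝ) < τ := one_pos.trans_le hτ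
  set E : ℝ := -(N₀ : ℝ) + 3 / 2 with hE_def
  set S := (Set.Ioo (sm - ρ) (sp + ρ)) ×ˢ
      Metric.ball (0 : EuclideanSpace ℝ (Fin 3)) ρ with hS_def
  set a : ℝ := τ * C with ha_def
  have ha : 0 < a := mul_pos hτ0 hC
  set K : ℝ := 3 * (τ ^ 4 * ((Nat.factorial (N₀+1) : ℝ) / a ^ (N₀+1))
      + τ ^ 2 * ((Nat.factorial (N₁+1) : ℝ) / a ^ (N₁+1)) + (τ ^ (-(N₂:ℝ))) ^ 2) with hK_def
  have hK0 : 0 ≤ K := by rw [hK_def]; positivity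
  -- integrability of the Gaussian majorant
  have hgauss_int : Integrable
      (fun z : EuclideanSpace ℝ (Fin 3) => Real.exp (-a * ‖z‖ ^ 2)) := by
    have h := (GaussianFourier.integrable_cexp_neg_mul_sq_norm_add
      (V := EuclideanSpace ℝ (Fin 3)) (b := (a:ℂ)) (by simpa using ha) 0 0).norm
    refine h.congr (Filter.Eventually.of_forall fun z => ?_)
    simp only [Complex.norm_exp, zero_mul, add_zero, neg_mul,
      Complex.neg_re, Complex.mul_re, Complex.ofReal_re, Complex.ofReal_im,
      ← Complex.ofReal_pow]
    norm_num
  -- pointwise bound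
  have hptwise : ∀ p ∈ S, ‖F p‖ ^ 2 ≤ K * Real.exp (-a * ‖p.2‖ ^ 2) := by
    intro p hp
    have hr : (0:ℝ) ≤ ‖p.2‖ := norm_nonneg _
    set r : ℝ := ‖p.2‖ with hr_def
    set e : ℝ := Real.exp (-a * r ^ 2) with he_def
    have he0 : 0 < e := Real.exp_pos _
    have he1 : e ≤ 1 := by
      rw [he_def]
      apply Real.exp_le_one_iff.mpr
      nlinarith
    have hexp : ‖Complex.exp (Complex.I * τ * φ p)‖ ≤ e := by
      rw [Complex.norm_exp, he_def]
      apply Real.exp_le_exp.mpr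
      have him : C * r ^ 2 ≤ (φ p).im := hφ p hp
      have hre : (Complex.I * τ * φ p).re = -(τ * (φ p).im) := by
        simp [Complex.mul_re, Complex.mul_im]
      rw [hre]
      rw [ha_def]
      nlinarith
    have hG0 : (0:ℝ) ≤ τ ^ 2 * r ^ (N₀ + 1) + τ * r ^ (N₁ + 1) + τ ^ (-(N₂:ℝ)) := by
      positivity
    have hFle : ‖F p‖ ≤ e * (τ ^ 2 * r ^ (N₀ + 1) + τ * r ^ (N₁ + 1) + τ ^ (-(N₂:ℝ))) :=
      (hF p hp).trans (mul_le_mul_of_nonneg_right hexp hG0)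
    have h1 : (r ^ (N₀+1)) ^ 2 * e ≤ (Nat.factorial (N₀+1) : ℝ) / a ^ (N₀+1) := moment_bound r ha _
    have h2 : (r ^ (N₁+1)) ^ 2 * e ≤ (Nat.factorial (N₁+1) : ℝ) / a ^ (N₁+1) := moment_bound r ha _
    have hsum : e * (τ ^ 2 * r ^ (N₀ + 1) + τ * r ^ (N₁ + 1) + τ ^ (-(N₂:ℝ))) ^ 2 ≤ K := by
      have hsq : (τ ^ 2 * r ^ (N₀ + 1) + τ * r ^ (N₁ + 1) + τ ^ (-(N₂:ℝ))) ^ 2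
          ≤ 3 * ((τ ^ 2 * r ^ (N₀ + 1)) ^ 2 + (τ * r ^ (N₁ + 1)) ^ 2
            + (τ ^ (-(N₂:ℝ))) ^ 2) := by
        nlinarith [sq_nonneg (τ ^ 2 * r ^ (N₀ + 1) - τ * r ^ (N₁ + 1)),
          sq_nonneg (τ * r ^ (N₁ + 1) - τ ^ (-(N₂:ℝ))),
          sq_nonneg (τ ^ 2 * r ^ (N₀ + 1) - τ ^ (-(N₂:ℝ)))]
      have t1 : e * (τ ^ 2 * r ^ (N₀ + 1)) ^ 2 ≤ τ ^ 4 * ((Nat.factorial (N₀+1) : ℝ) / a ^ (N₀+1)) := by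
        have heq : e * (τ ^ 2 * r ^ (N₀ + 1)) ^ 2 = τ ^ 4 * ((r ^ (N₀+1)) ^ 2 * e) := by ring
        rw [heq]
        exact mul_le_mul_of_nonneg_left h1 (by positivity)
      have t2 : e * (τ * r ^ (N₁ + 1)) ^ 2 ≤ τ ^ 2 * ((Nat.factorial (N₁+1) : ℝ) / a ^ (N₁+1)) := by
        have heq : e * (τ * r ^ (N₁ + 1)) ^ 2 = τ ^ 2 * ((r ^ (N₁+1)) ^ 2 * e) := by ring
        rw [heq]
        exact mul_le_mul_of_nonneg_left h2 (by positivity)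
      have t3 : e * (τ ^ (-(N₂:ℝ))) ^ 2 ≤ (τ ^ (-(N₂:ℝ))) ^ 2 :=
        mul_le_of_le_one_left (sq_nonneg _) he1
      calc e * (τ ^ 2 * r ^ (N₀ + 1) + τ * r ^ (N₁ + 1) + τ ^ (-(N₂:ℝ))) ^ 2
          ≤ e * (3 * ((τ ^ 2 * r ^ (N₀ + 1)) ^ 2 + (τ * r ^ (N₁ + 1)) ^ 2
            + (τ ^ (-(N₂:ℝ))) ^ 2)) := mul_le_mul_of_nonneg_left hsq he0.le
        _ = 3 * (e * (τ ^ 2 * r ^ (N₀ + 1)) ^ 2 + e * (τ * r ^ (N₁ + 1)) ^ 2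
            + e * (τ ^ (-(N₂:ℝ))) ^ 2) := by ring
        _ ≤ 3 * (τ ^ 4 * ((Nat.factorial (N₀+1) : ℝ) / a ^ (N₀+1))
            + τ ^ 2 * ((Nat.factorial (N₁+1) : ℝ) / a ^ (N₁+1)) + (τ ^ (-(N₂:ℝ))) ^ 2) := by
          linarith
        _ = K := by rw [hK_def]
    calc ‖F p‖ ^ 2
        ≤ (e * (τ ^ 2 * r ^ (N₀ + 1) + τ * r ^ (N₁ + 1) + τ ^ (-(N₂:ℝ)))) ^ 2 :=
          pow_le_pow_left₀ (norm_nonneg _) hFle 2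
      _ = (e * (τ ^ 2 * r ^ (N₀ + 1) + τ * r ^ (N₁ + 1) + τ ^ (-(N₂:ℝ))) ^ 2) * e := by
          ring
      _ ≤ K * e := mul_le_mul_of_nonneg_right hsum he0.le
      _ = K * Real.exp (-a * ‖p.2‖ ^ 2) := by rw [he_def]
  -- measurability / integrability
  have hmeasS : MeasurableSet S := measurableSet_Ioo.prod measurableSet_ball
  have hg_int_big : IntegrableOn
      (fun p : ℝ × EuclideanSpace ℝ (Fin 3) => K * Real.exp (-a * ‖p.2‖ ^ 2))
      ((Set.Ioo (sm - ρ) (sp + ρ)) ×ˢ (Set.univ : Set (EuclideanSpace ℝ (Fin 3)))) := by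
    rw [IntegrableOn, Measure.volume_eq_prod, ← Measure.prod_restrict, Measure.restrict_univ]
    exact Integrable.mul_prod (integrableOn_const (C := K) measure_Ioo_lt_top.ne) hgauss_int
  have hsub : S ⊆ (Set.Ioo (sm - ρ) (sp + ρ)) ×ˢ (Set.univ : Set (EuclideanSpace ℝ (Fin 3))) := by
    rw [hS_def]; exact Set.prod_mono_right (Set.subset_univ _)
  have hg_int_S : IntegrableOn
      (fun p : ℝ × EuclideanSpace ℝ (Fin 3) => K * Real.exp (-a * ‖p.2‖ ^ 2)) S :=
    hg_int_big.mono_set hsub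
  have hF_int : IntegrableOn (fun p => ‖F p‖ ^ 2) S := by
    refine hg_int_S.integrable.mono ((hFmeas.norm.pow_const 2).aestronglyMeasurable) ?_
    refine (ae_restrict_iff' hmeasS).2 (Filter.Eventually.of_forall fun p hp => ?_)
    have hb := hptwise p hp
    have h0 : (0:ℝ) ≤ K * Real.exp (-a * ‖p.2‖ ^ 2) := by positivity
    rw [Real.norm_eq_abs, Real.norm_eq_abs, abs_of_nonneg (by positivity),
      abs_of_nonneg h0]
    exact hb
  -- main chain
  calc (∫ p in S, ‖F p‖ ^ 2)
      ≤ ∫ p in S, K * Real.exp (-a * ‖p.2‖ ^ 2) :=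
        setIntegral_mono_on hF_int hg_int_S hmeasS hptwise
    _ ≤ ∫ p in (Set.Ioo (sm - ρ) (sp + ρ)) ×ˢ
          (Set.univ : Set (EuclideanSpace ℝ (Fin 3))),
          K * Real.exp (-a * ‖p.2‖ ^ 2) :=
        setIntegral_mono_set hg_int_big
          (Filter.Eventually.of_forall fun p => by positivity)
          (HasSubset.Subset.eventuallyLE hsub)
    _ = (∫ _ in Set.Ioo (sm - ρ) (sp + ρ), K) *
          ∫ z in (Set.univ : Set (EuclideanSpace ℝ (Fin 3))), Real.exp (-a * ‖z‖ ^ 2) := by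
        rw [Measure.volume_eq_prod]
        exact setIntegral_prod_mul (fun _ : ℝ => K)
          (fun z : EuclideanSpace ℝ (Fin 3) => Real.exp (-a * ‖z‖ ^ 2)) _ _
    _ = ((sp + ρ - (sm - ρ)) * K) * (π / a) ^ ((3:ℝ) / 2) := by
        rw [setIntegral_const, Measure.restrict_univ,
          GaussianFourier.integral_rexp_neg_mul_sq_norm ha,
          Real.volume_real_Ioo_of_le (by linarith), smul_eq_mul]
        norm_num [finrank_euclideanSpace_fin]
    _ ≤ (T + 2) * (3 * ((((Nat.factorial (N₀+1) : ℝ)) / C ^ (N₀+1) + ((Nat.factorial (N₁+1) : ℝ)) / C ^ (N₁+1) + 1)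
          * (π ^ ((3:ℝ)/2) / C ^ ((3:ℝ)/2)))) * τ ^ E := by
        have hP : (π / a) ^ ((3:ℝ)/2)
            = (π ^ ((3:ℝ)/2) / C ^ ((3:ℝ)/2)) * (τ ^ ((3:ℝ)/2))⁻¹ := by
          rw [ha_def, show π / (τ * C) = (π / C) * τ⁻¹ by rw [mul_comm τ C, div_mul_eq_div_div, div_eq_mul_inv],
            Real.mul_rpow (by positivity) (by positivity),
            Real.div_rpow hπ.le hC.le, Real.inv_rpow hτ0.le]
        set Q : ℝ := π ^ ((3:ℝ)/2) / C ^ ((3:ℝ)/2) with hQ_def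
        have hQ0 : 0 ≤ Q := by rw [hQ_def]; positivity
        have hV : sp + ρ - (sm - ρ) ≤ T + 2 := by linarith
        have hV0 : 0 ≤ sp + ρ - (sm - ρ) := by linarith
        have hKP0 : 0 ≤ K * (π / a) ^ ((3:ℝ)/2) := by positivity
        have hterm1 : τ ^ 4 * ((Nat.factorial (N₀+1) : ℝ) / a ^ (N₀+1)) * (Q * (τ ^ ((3:ℝ)/2))⁻¹)
            ≤ ((Nat.factorial (N₀+1) : ℝ) / C ^ (N₀+1) * Q) * τ ^ E := by
          have hb := tau_pow_bound hτ 4 (N₀+1) E (by rw [hE_def]; push_cast; linarith)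
          calc τ ^ 4 * ((Nat.factorial (N₀+1) : ℝ) / a ^ (N₀+1)) * (Q * (τ ^ ((3:ℝ)/2))⁻¹)
              = ((Nat.factorial (N₀+1) : ℝ) / C ^ (N₀+1) * Q)
                * (τ ^ 4 * (τ ^ (N₀+1))⁻¹ * (τ ^ ((3:ℝ)/2))⁻¹) := by
                rw [ha_def, mul_pow]
                field_simp
            _ ≤ ((Nat.factorial (N₀+1) : ℝ) / C ^ (N₀+1) * Q) * τ ^ E :=
                mul_le_mul_of_nonneg_left hb (by positivity)
        have hterm2 : τ ^ 2 * ((Nat.factorial (N₁+1) : ℝ) / a ^ (N₁+1)) * (Q * (τ ^ ((3:ℝ)/2))⁻¹)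
            ≤ ((Nat.factorial (N₁+1) : ℝ) / C ^ (N₁+1) * Q) * τ ^ E := by
          have hcast : (N₀ : ℝ) ≤ (N₁ : ℝ) + 2 := by exact_mod_cast hN₀
          have hb := tau_pow_bound hτ 2 (N₁+1) E (by rw [hE_def]; push_cast; linarith)
          calc τ ^ 2 * ((Nat.factorial (N₁+1) : ℝ) / a ^ (N₁+1)) * (Q * (τ ^ ((3:ℝ)/2))⁻¹)
              = ((Nat.factorial (N₁+1) : ℝ) / C ^ (N₁+1) * Q)
                * (τ ^ 2 * (τ ^ (N₁+1))⁻¹ * (τ ^ ((3:ℝ)/2))⁻¹) := by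
                rw [ha_def, mul_pow]
                field_simp
            _ ≤ ((Nat.factorial (N₁+1) : ℝ) / C ^ (N₁+1) * Q) * τ ^ E :=
                mul_le_mul_of_nonneg_left hb (by positivity)
        have hterm3 : (τ ^ (-(N₂:ℝ))) ^ 2 * (Q * (τ ^ ((3:ℝ)/2))⁻¹) ≤ Q * τ ^ E := by
          have hcast0 : (N₀ : ℝ) ≤ (N₁ : ℝ) + 2 := by exact_mod_cast hN₀
          have hcast1 : (N₁ : ℝ) ≤ 2 * (N₂ : ℝ) + 1 := by exact_mod_cast hN₁
          have hb := tau_pow_bound' hτ N₂ E (by rw [hE_def]; linarith)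
          calc (τ ^ (-(N₂:ℝ))) ^ 2 * (Q * (τ ^ ((3:ℝ)/2))⁻¹)
              = Q * ((τ ^ (-(N₂:ℝ))) ^ 2 * (τ ^ ((3:ℝ)/2))⁻¹) := by ring
            _ ≤ Q * τ ^ E := mul_le_mul_of_nonneg_left hb hQ0
        calc ((sp + ρ - (sm - ρ)) * K) * (π / a) ^ ((3:ℝ)/2)
            = (sp + ρ - (sm - ρ)) * (K * (π / a) ^ ((3:ℝ)/2)) := by ring
          _ ≤ (T + 2) * (K * (π / a) ^ ((3:ℝ)/2)) :=
              mul_le_mul_of_nonneg_right hV hKP0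
          _ ≤ (T + 2) * (3 * (((Nat.factorial (N₀+1) : ℝ) / C ^ (N₀+1) + (Nat.factorial (N₁+1) : ℝ) / C ^ (N₁+1) + 1)
                * Q) * τ ^ E) := by
              refine mul_le_mul_of_nonneg_left ?_ (by linarith)
              rw [hK_def, hP]
              calc 3 * (τ ^ 4 * ((Nat.factorial (N₀+1) : ℝ) / a ^ (N₀+1))
                    + τ ^ 2 * ((Nat.factorial (N₁+1) : ℝ) / a ^ (N₁+1)) + (τ ^ (-(N₂:ℝ))) ^ 2)
                    * (Q * (τ ^ ((3:ℝ)/2))⁻¹)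
                  = 3 * (τ ^ 4 * ((Nat.factorial (N₀+1) : ℝ) / a ^ (N₀+1)) * (Q * (τ ^ ((3:ℝ)/2))⁻¹)
                    + τ ^ 2 * ((Nat.factorial (N₁+1) : ℝ) / a ^ (N₁+1)) * (Q * (τ ^ ((3:ℝ)/2))⁻¹)
                    + (τ ^ (-(N₂:ℝ))) ^ 2 * (Q * (τ ^ ((3:ℝ)/2))⁻¹)) := by ring
                _ ≤ 3 * (((Nat.factorial (N₀+1) : ℝ) / C ^ (N₀+1) * Q) * τ ^ E
                    + ((Nat.factorial (N₁+1) : ℝ) / C ^ (N₁+1) * Q) * τ ^ E + Q * τ ^ E) := by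
                    linarith
                _ = 3 * (((Nat.factorial (N₀+1) : ℝ) / C ^ (N₀+1) + (Nat.factorial (N₁+1) : ℝ) / C ^ (N₁+1) + 1)
                    * Q) * τ ^ E := by ring
          _ = (T + 2) * (3 * (((Nat.factorial (N₀+1) : ℝ) / C ^ (N₀+1) + (Nat.factorial (N₁+1) : ℝ) / C ^ (N₁+1) + 1)
                * Q)) * τ ^ E := by ring
    _ = (T + 2) * (3 * ((((Nat.factorial (N₀+1) : ℝ)) / C ^ (N₀+1) + ((Nat.factorial (N₁+1) : ℝ)) / C ^ (N₁+1) + 1)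
          * (π ^ ((3:ℝ)/2) / C ^ ((3:ℝ)/2)))) * τ ^ (-(N₀ : ℝ) + 3 / 2) := by
        rw [hE_def]
end
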